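/- Let C ⊆ ℝ² be the interior of a convex body. Then the VC-dimension of the set system (ℝ², T_C) of translates of C is at most 3, and consequently for every n ≥ 1 and every set S ⊆ ℝ² with |S| = n, |{S ∩ (x+C) : x ∈ ℝ²}| ≤ C(n,0) + C(n,1) + C(n,2) + C(n,3). -/

import Mathlib

/-- The translate `x + C` of a set `C ⊆ ℝ²` by a vector `x`. -/
def translateSet (x : ℝ × ℝ) (C : Set (ℝ × ℝ)) : Set (ℝ × ℝ) :=
  (fun y => x + y) '' C


/-- Decompose any vector over a non-parallel pair in the plane. -/
lemma decompose (v w : ℝ × ℝ) (hw : w ≠ 0) (h : ¬ ∃ k : ℝ, v = k • w) (u : ℝ × ℝ) :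
    ∃ s r : ℝ, u = s • v + r • w := by
  set D : ℝ := v.1 * w.2 - v.2 * w.1 with hD
  have hD0 : D ≠ 0 := by
    intro h0
    apply h
    rcases eq_or_ne w.1 0 with h1 | h1
    · have h2 : w.2 ≠ 0 := by
        intro h2; exact hw (Prod.ext h1 h2)
      refine ⟨v.2 / w.2, Prod.ext ?_ ?_⟩ <;> simp only [Prod.smul_fst, Prod.smul_snd, smul_eq_mul] <;> field_simp <;> nlinarith [h0]
    · refine ⟨v.1 / w.1, Prod.ext ?_ ?_⟩ <;> simp only [Prod.smul_fst, Prod.smul_snd, smul_eq_mul] <;> field_simp <;> nlinarith [h0]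
  refine ⟨(u.1 * w.2 - u.2 * w.1) / D, (v.1 * u.2 - v.2 * u.1) / D, Prod.ext ?_ ?_⟩ <;>
    simp only [Prod.smul_fst, Prod.smul_snd, Prod.fst_add, Prod.snd_add, smul_eq_mul] <;> field_simp <;> rw [hD] <;> ring


lemma combo3 {X : Set (ℝ × ℝ)} (hX : Convex ℝ X) {x y z : ℝ × ℝ} {a b c : ℝ}
    (hx : x ∈ X) (hy : y ∈ X) (hz : z ∈ X)
    (ha : 0 ≤ a) (hb : 0 ≤ b) (hc : 0 ≤ c) (hsum : a + b + c = 1) :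
    a • x + b • y + c • z ∈ X := by
  have := hX.sum_mem (t := (Finset.univ : Finset (Fin 3)))
    (w := ![a, b, c]) (z := ![x, y, z]) ?_ ?_ ?_
  · simpa [Fin.sum_univ_three, add_assoc] using this
  · intro i _; fin_cases i <;> simpa
  · simpa [Fin.sum_univ_three]
  · intro i _; fin_cases i <;> simpa

lemma quadrant {X : Set (ℝ × ℝ)} (hX : Convex ℝ X) (p v w t : ℝ × ℝ)
    {α β γ δ s r : ℝ}
    (hα : 0 < α) (hβ : 0 < β) (hγ : 0 < γ) (hδ : 0 < δ) (hs : 0 ≤ s) (hr : 0 ≤ r)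
    (ht : t = -(s • v + r • w))
    (ha : p + α • w ∈ X) (hc : p - γ • w ∈ X)
    (hb : p + β • v - t ∈ X) (hd : p - δ • v - t ∈ X) :
    p + β • v ∈ X ∨ p - γ • w - t ∈ X := by
  have hsβ : (0:ℝ) < s + β := by linarith
  have hαγ : (0:ℝ) < α + γ := by linarith
  have hγr : (0:ℝ) < γ + r := by linarith
  have hβδ : (0:ℝ) < β + δ := by linarith
  rcases le_or_gt (β * r) (γ * s) with hcase | hcase
  · left
    have hν0 : 0 ≤ ((s / (s + β)) * γ - (β / (s + β)) * r) / (α + γ) := by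
      apply div_nonneg _ hαγ.le
      rw [div_mul_eq_mul_div, div_mul_eq_mul_div, sub_nonneg, div_le_div_iff₀ hsβ hsβ]
      nlinarith
    have hl0 : 0 ≤ ((s / (s + β)) * α + (β / (s + β)) * r) / (α + γ) := by positivity
    have hμ0 : 0 ≤ β / (s + β) := by positivity
    have hsum : ((s / (s + β)) * γ - (β / (s + β)) * r) / (α + γ)
        + ((s / (s + β)) * α + (β / (s + β)) * r) / (α + γ) + β / (s + β) = 1 := by
      field_simp; ring
    have hmem := combo3 hX ha hc hb hν0 hl0 hμ0 hsum
    have heq : (((s / (s + β)) * γ - (β / (s + β)) * r) / (α + γ)) • (p + α • w)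
        + (((s / (s + β)) * α + (β / (s + β)) * r) / (α + γ)) • (p - γ • w)
        + (β / (s + β)) • (p + β • v - t) = p + β • v := by
      rw [ht]; match_scalars
      all_goals field_simp
      all_goals try ring
      all_goals exact Or.inl (by first | trivial | ring)
    rwa [heq] at hmem
  · right
    have hl0 : 0 ≤ γ / (γ + r) := by positivity
    have hμ0 : 0 ≤ (s * γ + δ * r) / ((γ + r) * (β + δ)) := by positivity
    have hν0 : 0 ≤ (r * β - s * γ) / ((γ + r) * (β + δ)) := by
      apply div_nonneg _ (by positivity)
      nlinarith
    have hsum : γ / (γ + r) + (s * γ + δ * r) / ((γ + r) * (β + δ))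
        + (r * β - s * γ) / ((γ + r) * (β + δ)) = 1 := by
      field_simp; ring
    have hmem := combo3 hX hc hb hd hl0 hμ0 hν0 hsum
    have heq : (γ / (γ + r)) • (p - γ • w)
        + ((s * γ + δ * r) / ((γ + r) * (β + δ))) • (p + β • v - t)
        + ((r * β - s * γ) / ((γ + r) * (β + δ))) • (p - δ • v - t)
        = p - γ • w - t := by
      rw [ht]; match_scalars
      all_goals field_simp
      all_goals try ring
      all_goals exact Or.inl (by first | trivial | ring)
    rwa [heq] at hmem





lemma between_mem {X : Set (ℝ × ℝ)} (hX : Convex ℝ X) {q z : ℝ × ℝ} {e f : ℝ}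
    (hq : q ∈ X) (hz : q + e • z ∈ X) (h0 : 0 ≤ f) (hfe : f ≤ e) :
    q + f • z ∈ X := by
  rcases eq_or_lt_of_le (h0.trans hfe) with he | he
  · have : f = 0 := le_antisymm (hfe.trans he.symm.le) h0
    simpa [this]
  · have h1 : 0 ≤ 1 - f / e := by
      rw [sub_nonneg]; exact div_le_one_of_le₀ hfe he.le
    have h2 : 0 ≤ f / e := by positivity
    have := hX hq hz h1 h2 (by ring)
    have heq : (1 - f / e) • q + (f / e) • (q + e • z) = q + f • z := by
      match_scalars <;> field_simp <;> ring
    rwa [heq] at this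

lemma no_cross {X : Set (ℝ × ℝ)} (hX : Convex ℝ X) (t a b c d p : ℝ × ℝ)
    (ha : a ∈ X) (hc : c ∈ X) (hb : b - t ∈ X) (hd : d - t ∈ X)
    (hp1 : p ∈ segment ℝ a c) (hp2 : p ∈ segment ℝ b d)
    (hnb : b ∉ X) (hnd : d ∉ X) (hna : a - t ∉ X) (hnc : c - t ∉ X) : False := by
  obtain ⟨u1, u2, hu1, hu2, hu, hpac⟩ := hp1
  obtain ⟨m1, m2, hm1, hm2, hm, hpbd⟩ := hp2
  -- p ∈ X and p - t ∈ X
  have hpX : p ∈ X := by rw [← hpac]; exact hX ha hc hu1 hu2 hu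
  have hptX : p - t ∈ X := by
    have h1 := hX hb hd hm1 hm2 hm
    have heq : m1 • (b - t) + m2 • (d - t) = (m1 • b + m2 • d) - (m1 + m2) • t := by
      module
    rw [heq, hm, hpbd, one_smul] at h1
    exact h1
  -- exclude endpoint degeneracies
  rcases eq_or_lt_of_le hu2 with hα | hα
  · -- u2 = 0, p = a
    apply hna
    have : p = a := by
      rw [← hpac, ← hα]; match_scalars <;> simp <;> linarith
    rwa [← this]
  rcases eq_or_lt_of_le hu1 with hγ | hγ
  · apply hnc
    have : p = c := by
      rw [← hpac, ← hγ]; match_scalars <;> simp <;> linarith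
    rwa [← this]
  rcases eq_or_lt_of_le hm2 with hβ | hβ
  · apply hnb
    have : p = b := by
      rw [← hpbd, ← hβ]; match_scalars <;> simp <;> linarith
    rwa [← this]
  rcases eq_or_lt_of_le hm1 with hδ | hδ
  · apply hnd
    have : p = d := by
      rw [← hpbd, ← hδ]; match_scalars <;> simp <;> linarith
    rwa [← this]
  -- set up directions
  set w : ℝ × ℝ := a - c with hw
  set v : ℝ × ℝ := b - d with hv
  have haw : a = p + u2 • w := by rw [← hpac, hw]; match_scalars <;> simp <;> linarith
  have hcw : c = p - u1 • w := by rw [← hpac, hw]; match_scalars <;> simp <;> linarith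
  have hbv : b = p + m2 • v := by rw [← hpbd, hv]; match_scalars <;> simp <;> linarith
  have hdv : d = p - m1 • v := by rw [← hpbd, hv]; match_scalars <;> simp <;> linarith
  have hw0 : w ≠ 0 := by
    intro h0
    apply hna
    have : a = p := by rw [haw, h0]; simp
    rw [this]; exact hptX
  by_cases hcol : ∃ k : ℝ, v = k • w
  · -- collinear case
    obtain ⟨k, hk⟩ := hcol
    rcases lt_trichotomy k 0 with hk0 | hk0 | hk0
    · -- d = p + (m1 * (-k)) • w
      have hd' : d = p + (m1 * (-k)) • w := by
        rw [hdv, hk]; match_scalars <;> ring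
      rcases le_or_gt (m1 * (-k)) u2 with hle | hlt
      · apply hnd
        rw [hd']
        have haX : p + u2 • w ∈ X := by rw [← haw]; exact ha
        exact between_mem hX hpX haX (mul_nonneg hδ.le (by linarith)) hle
      · apply hna
        have had : a - t = (p - t) + u2 • w := by rw [haw]; module
        have hdd : d - t = (p - t) + (m1 * (-k)) • w := by rw [hd']; module
        rw [had]
        exact between_mem hX hptX (by rw [← hdd]; exact hd) hu2 hlt.le
    · -- k = 0 → v = 0 → b = p
      apply hnb
      have : b = p := by rw [hbv, hk, hk0]; simp
      rw [this]; exact hpX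
    · have hb' : b = p + (m2 * k) • w := by
        rw [hbv, hk]; match_scalars <;> ring
      rcases le_or_gt (m2 * k) u2 with hle | hlt
      · apply hnb
        rw [hb']
        have haX : p + u2 • w ∈ X := by rw [← haw]; exact ha
        exact between_mem hX hpX haX (mul_nonneg hβ.le hk0.le) hle
      · apply hna
        have had : a - t = (p - t) + u2 • w := by rw [haw]; module
        have hbb : b - t = (p - t) + (m2 * k) • w := by rw [hb']; module
        rw [had]
        exact between_mem hX hptX (by rw [← hbb]; exact hb) hu2 hlt.le
  · -- independent case
    obtain ⟨s, r, hsr⟩ := decompose v w hw0 hcol (-t)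
    have ht : t = -(s • v + r • w) := by rw [← hsr]; simp
    have ha' : p + u2 • w ∈ X := by rw [← haw]; exact ha
    have hc' : p - u1 • w ∈ X := by rw [← hcw]; exact hc
    have hb' : p + m2 • v - t ∈ X := by
      have : p + m2 • v - t = b - t := by rw [hbv]
      rw [this]; exact hb
    have hd' : p - m1 • v - t ∈ X := by
      have : p - m1 • v - t = d - t := by rw [hdv]
      rw [this]; exact hd
    rcases le_or_gt 0 s with hs | hs <;> rcases le_or_gt 0 r with hr | hr
    · rcases quadrant hX p v w t hα hβ hγ hδ hs hr ht ha' hc' hb' hd' with h | h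
      · exact hnb (by rwa [← hbv] at h)
      · exact hnc (by rw [hcw]; exact h)
    · -- s ≥ 0, r < 0 : flip w
      have ht2 : t = -(s • v + (-r) • (-w)) := by rw [ht]; module
      have h1 : p + u1 • (-w) ∈ X := by
        have : p + u1 • (-w) = p - u1 • w := by module
        rw [this]; exact hc'
      have h2 : p - u2 • (-w) ∈ X := by
        have : p - u2 • (-w) = p + u2 • w := by module
        rw [this]; exact ha'
      rcases quadrant hX p v (-w) t hγ hβ hα hδ hs (by linarith) ht2 h1 h2 hb' hd' with h | h
      · exact hnb (by rwa [← hbv] at h)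
      · apply hna
        have : p - u2 • (-w) - t = a - t := by rw [haw]; module
        rwa [this] at h
    · -- s < 0, r ≥ 0 : flip v
      have ht2 : t = -((-s) • (-v) + r • w) := by rw [ht]; module
      have h1 : p + m1 • (-v) - t ∈ X := by
        have : p + m1 • (-v) - t = p - m1 • v - t := by module
        rw [this]; exact hd'
      have h2 : p - m2 • (-v) - t ∈ X := by
        have : p - m2 • (-v) - t = p + m2 • v - t := by module
        rw [this]; exact hb'
      rcases quadrant hX p (-v) w t hα hδ hγ hβ (by linarith) hr ht2 ha' hc' h1 h2 with h | h
      · apply hnd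
        have : p + m1 • (-v) = d := by rw [hdv]; module
        rwa [this] at h
      · exact hnc (by rw [hcw]; exact h)
    · -- s < 0, r < 0 : flip both
      have ht2 : t = -((-s) • (-v) + (-r) • (-w)) := by rw [ht]; module
      have h1 : p + u1 • (-w) ∈ X := by
        have : p + u1 • (-w) = p - u1 • w := by module
        rw [this]; exact hc'
      have h2 : p - u2 • (-w) ∈ X := by
        have : p - u2 • (-w) = p + u2 • w := by module
        rw [this]; exact ha'
      have h3 : p + m1 • (-v) - t ∈ X := by
        have : p + m1 • (-v) - t = p - m1 • v - t := by module
        rw [this]; exact hd'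
      have h4 : p - m2 • (-v) - t ∈ X := by
        have : p - m2 • (-v) - t = p + m2 • v - t := by module
        rw [this]; exact hb'
      rcases quadrant hX p (-v) (-w) t hγ hδ hα hβ (by linarith) (by linarith)
        ht2 h1 h2 h3 h4 with h | h
      · apply hnd
        have : p + m1 • (-v) = d := by rw [hdv]; module
        rwa [this] at h
      · apply hna
        have : p - u2 • (-w) - t = a - t := by rw [haw]; module
        rwa [this] at h



lemma mem_translateSet {x y : ℝ × ℝ} {C : Set (ℝ × ℝ)} :
    y ∈ translateSet x C ↔ y - x ∈ C := by
  constructor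
  · rintro ⟨z, hz, rfl⟩; simpa
  · intro h; exact ⟨y - x, h, by module⟩

lemma translateSet_convex {C : Set (ℝ × ℝ)} (hC : Convex ℝ C) (x : ℝ × ℝ) :
    Convex ℝ (translateSet x C) := hC.translate x


lemma singleton_case {C : Set (ℝ × ℝ)} (hCconv : Convex ℝ C) {A : Finset (ℝ × ℝ)}
    (H : ∀ B ⊆ A, ∃ x : ℝ × ℝ, (↑B : Set (ℝ × ℝ)) = ↑A ∩ translateSet x C)
    {f : Fin 4 → ℝ × ℝ} (hf : Function.Injective f) (hmem : ∀ i, f i ∈ A) (i : Fin 4)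
    (hp : f i ∈ convexHull ℝ (f '' ({i}ᶜ : Set (Fin 4)))) : False := by
  classical
  obtain ⟨x, hx⟩ := H (A.erase (f i)) (A.erase_subset _)
  have hsub : f '' ({i}ᶜ : Set (Fin 4)) ⊆ translateSet x C := by
    rintro - ⟨j, hj, rfl⟩
    have hji : j ≠ i := hj
    have : f j ∈ (↑(A.erase (f i)) : Set (ℝ × ℝ)) := by
      simp only [Finset.coe_erase, Set.mem_diff, Set.mem_singleton_iff]
      exact ⟨hmem j, fun h => hji (hf h)⟩
    rw [hx] at this
    exact this.2
  have hT : f i ∈ translateSet x C :=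
    convexHull_min hsub (translateSet_convex hCconv x) hp
  have : f i ∈ (↑(A.erase (f i)) : Set (ℝ × ℝ)) := by
    rw [hx]; exact ⟨hmem i, hT⟩
  simp at this

lemma no_four {C : Set (ℝ × ℝ)} (hCconv : Convex ℝ C) (A : Finset (ℝ × ℝ))
    (hA4 : A.card = 4)
    (H : ∀ B ⊆ A, ∃ x : ℝ × ℝ, (↑B : Set (ℝ × ℝ)) = ↑A ∩ translateSet x C) : False := by
  classical
  have hA4' : Fintype.card (↥(A : Set (ℝ × ℝ))) = 4 := by
    simpa using hA4
  set e := (Fintype.equivFinOfCardEq hA4').symm with hedef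
  set f : Fin 4 → ℝ × ℝ := fun i => ((e i : (A : Set (ℝ × ℝ))) : ℝ × ℝ) with hfdef
  have hf : Function.Injective f := Subtype.coe_injective.comp e.injective
  have hmem : ∀ i, f i ∈ A := fun i => (e i).2
  have hdep : ¬ AffineIndependent ℝ f := by
    intro hind
    have h1 := hind.card_le_finrank_succ
    have h2 := Submodule.finrank_le (vectorSpan ℝ (Set.range f))
    simp only [Fintype.card_fin] at h1
    have h3 : Module.finrank ℝ (ℝ × ℝ) = 2 := by simp
    omega
  obtain ⟨I, hne⟩ := Convex.radon_partition hdep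
  obtain ⟨p, hpmem⟩ := hne
  have hpI := hpmem.1
  have hpIc := hpmem.2
  -- case on the size of I
  have hcard : I.toFinset.card + Iᶜ.toFinset.card = 4 := by
    rw [Set.toFinset_compl, Finset.card_compl]
    have : I.toFinset.card ≤ 4 := by
      have := Finset.card_le_card (Finset.subset_univ I.toFinset)
      simpa using this
    simp only [Fintype.card_fin]
    omega
  -- helper facts
  have key2 : ∀ (i j k l : Fin 4), i ≠ j → k ≠ l → k ≠ i → k ≠ j → l ≠ i → l ≠ j →
      p ∈ segment ℝ (f i) (f j) → p ∈ segment ℝ (f k) (f l) → False := by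
    intro i j k l hij hkl hki hkj hli hlj hseg1 hseg2
    obtain ⟨x₁, hx₁⟩ := H {f i, f j} (by
      intro z hz
      simp only [Finset.mem_insert, Finset.mem_singleton] at hz
      rcases hz with rfl | rfl
      exacts [hmem i, hmem j])
    obtain ⟨x₂, hx₂⟩ := H {f k, f l} (by
      intro z hz
      simp only [Finset.mem_insert, Finset.mem_singleton] at hz
      rcases hz with rfl | rfl
      exacts [hmem k, hmem l])
    set X : Set (ℝ × ℝ) := translateSet x₁ C with hXdef
    set t : ℝ × ℝ := x₂ - x₁ with htdef
    have hmemX : ∀ z : ℝ × ℝ, z - t ∈ X ↔ z ∈ translateSet x₂ C := by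
      intro z
      rw [hXdef, mem_translateSet, mem_translateSet, htdef]
      have heq : z - (x₂ - x₁) - x₁ = z - x₂ := by abel
      rw [heq]
    have hinT1 : ∀ z, z ∈ ({f i, f j} : Finset (ℝ × ℝ)) → z ∈ X := by
      intro z hz
      have : z ∈ (↑({f i, f j} : Finset (ℝ × ℝ)) : Set (ℝ × ℝ)) := by exact_mod_cast hz
      rw [hx₁] at this; exact this.2
    have hinT2 : ∀ z, z ∈ ({f k, f l} : Finset (ℝ × ℝ)) → z ∈ translateSet x₂ C := by
      intro z hz
      have : z ∈ (↑({f k, f l} : Finset (ℝ × ℝ)) : Set (ℝ × ℝ)) := by exact_mod_cast hz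
      rw [hx₂] at this; exact this.2
    have hnotT1 : ∀ m : Fin 4, m ≠ i → m ≠ j → f m ∉ X := by
      intro m hmi hmj hT
      have : f m ∈ (↑({f i, f j} : Finset (ℝ × ℝ)) : Set (ℝ × ℝ)) := by
        rw [hx₁]; exact ⟨by exact_mod_cast hmem m, hT⟩
      simp only [Finset.coe_insert, Finset.coe_singleton, Set.mem_insert_iff,
        Set.mem_singleton_iff] at this
      rcases this with h | h
      exacts [hmi (hf h), hmj (hf h)]
    have hnotT2 : ∀ m : Fin 4, m ≠ k → m ≠ l → f m ∉ translateSet x₂ C := by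
      intro m hmk hml hT
      have : f m ∈ (↑({f k, f l} : Finset (ℝ × ℝ)) : Set (ℝ × ℝ)) := by
        rw [hx₂]; exact ⟨by exact_mod_cast hmem m, hT⟩
      simp only [Finset.coe_insert, Finset.coe_singleton, Set.mem_insert_iff,
        Set.mem_singleton_iff] at this
      rcases this with h | h
      exacts [hmk (hf h), hml (hf h)]
    refine no_cross (translateSet_convex hCconv x₁) t (f i) (f k) (f j) (f l) p
      (hinT1 _ (by simp)) (hinT1 _ (by simp)) ?_ ?_ hseg1 hseg2
      (hnotT1 k hki hkj) (hnotT1 l hli hlj) ?_ ?_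
    · rw [hmemX]; exact hinT2 _ (by simp)
    · rw [hmemX]; exact hinT2 _ (by simp)
    · rw [hmemX]; exact hnotT2 i (Ne.symm hki) (Ne.symm hli)
    · rw [hmemX]; exact hnotT2 j (Ne.symm hkj) (Ne.symm hlj)
  have hsingle : ∀ (i : Fin 4), p = f i → p ∈ convexHull ℝ (f '' ({i}ᶜ : Set (Fin 4))) →
      False := by
    intro i hpi hmemc
    exact singleton_case hCconv H hf hmem i (hpi ▸ hmemc)
  have h04 : I.toFinset.card = 0 ∨ I.toFinset.card = 1 ∨ I.toFinset.card = 2 ∨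
      I.toFinset.card = 3 ∨ I.toFinset.card = 4 := by omega
  rcases h04 with h0 | h1 | h2 | h3 | h4
  · -- I empty
    have : I = ∅ := Set.toFinset_eq_empty.mp (Finset.card_eq_zero.mp h0)
    rw [this] at hpI
    simp [convexHull_empty] at hpI
  · -- |I| = 1
    obtain ⟨i, hi⟩ := Finset.card_eq_one.mp h1
    have hIi : I = {i} := by
      ext j; rw [← Set.mem_toFinset, hi]; simp
    have hpfi : p = f i := by
      rw [hIi] at hpI
      simpa [convexHull_singleton] using hpI
    apply hsingle i hpfi
    rw [hIi] at hpIc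
    exact hpIc
  · -- |I| = 2
    obtain ⟨i, j, hij, hIij⟩ := Finset.card_eq_two.mp h2
    have hc2 : Iᶜ.toFinset.card = 2 := by omega
    obtain ⟨k, l, hkl, hKkl⟩ := Finset.card_eq_two.mp hc2
    have hiI : i ∈ I := by rw [← Set.mem_toFinset, hIij]; simp
    have hjI : j ∈ I := by rw [← Set.mem_toFinset, hIij]; simp
    have hkI : k ∈ Iᶜ := by rw [← Set.mem_toFinset, hKkl]; simp
    have hlI : l ∈ Iᶜ := by rw [← Set.mem_toFinset, hKkl]; simp
    have hIset : I = {i, j} := by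
      ext m; rw [← Set.mem_toFinset, hIij]; simp
    have hIcset : Iᶜ = {k, l} := by
      ext m; rw [← Set.mem_toFinset, hKkl]; simp
    have hseg1 : p ∈ segment ℝ (f i) (f j) := by
      rw [hIset] at hpI
      rwa [Set.image_insert_eq, Set.image_singleton, convexHull_pair] at hpI
    have hseg2 : p ∈ segment ℝ (f k) (f l) := by
      rw [hIcset] at hpIc
      rwa [Set.image_insert_eq, Set.image_singleton, convexHull_pair] at hpIc
    exact key2 i j k l hij hkl (fun h => hkI (h ▸ hiI)) (fun h => hkI (h ▸ hjI))
      (fun h => hlI (h ▸ hiI)) (fun h => hlI (h ▸ hjI)) hseg1 hseg2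
  · -- |I| = 3, so |Iᶜ| = 1
    have hc1 : Iᶜ.toFinset.card = 1 := by omega
    obtain ⟨i, hi⟩ := Finset.card_eq_one.mp hc1
    have hIci : Iᶜ = {i} := by
      ext j; rw [← Set.mem_toFinset, hi]; simp
    have hpfi : p = f i := by
      rw [hIci] at hpIc
      simpa [convexHull_singleton] using hpIc
    apply hsingle i hpfi
    have hIeq : I = ({i}ᶜ : Set (Fin 4)) := by
      rw [← hIci, compl_compl]
    rw [hIeq] at hpI
    exact hpI
  · -- I = univ, Iᶜ empty
    have hc0 : Iᶜ.toFinset.card = 0 := by omega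
    have : Iᶜ = ∅ := Set.toFinset_eq_empty.mp (Finset.card_eq_zero.mp hc0)
    rw [this] at hpIc
    simp [convexHull_empty] at hpIc




lemma part1 {C : Set (ℝ × ℝ)} (hCconv : Convex ℝ C) (A : Finset (ℝ × ℝ))
    (H : ∀ B ⊆ A, ∃ x : ℝ × ℝ, (↑B : Set (ℝ × ℝ)) = ↑A ∩ translateSet x C) :
    A.card ≤ 3 := by
  by_contra hcon
  push_neg at hcon
  obtain ⟨A', hA'A, hA'4⟩ := Finset.exists_subset_card_eq (show 4 ≤ A.card from hcon)
  apply no_four hCconv A' hA'4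
  intro B hBA'
  obtain ⟨x, hx⟩ := H B (hBA'.trans hA'A)
  refine ⟨x, ?_⟩
  ext z
  constructor
  · intro hz
    have hz' : z ∈ (↑A : Set (ℝ × ℝ)) ∩ translateSet x C := by rw [← hx]; exact hz
    exact ⟨by exact_mod_cast hBA' (by exact_mod_cast hz), hz'.2⟩
  · rintro ⟨hzA', hzT⟩
    have : z ∈ (↑A : Set (ℝ × ℝ)) ∩ translateSet x C :=
      ⟨by exact_mod_cast hA'A (by exact_mod_cast hzA'), hzT⟩
    rw [← hx] at this
    exact this

lemma part2 {C : Set (ℝ × ℝ)} (hCconv : Convex ℝ C) (n : ℕ) (S : Finset (ℝ × ℝ))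
    (hS : S.card = n) :
    Set.ncard {T : Set (ℝ × ℝ) | ∃ x : ℝ × ℝ, T = ↑S ∩ translateSet x C}
      ≤ n.choose 0 + n.choose 1 + n.choose 2 + n.choose 3 := by
  classical
  set 𝒜 : Finset (Finset (ℝ × ℝ)) :=
    S.powerset.filter (fun B => ∃ x : ℝ × ℝ, (↑B : Set (ℝ × ℝ)) = ↑S ∩ translateSet x C)
    with h𝒜
  -- the trace family equals the coercion image of 𝒜
  have himg : {T : Set (ℝ × ℝ) | ∃ x : ℝ × ℝ, T = ↑S ∩ translateSet x C}
      = (fun B : Finset (ℝ × ℝ) => (↑B : Set (ℝ × ℝ))) '' ↑𝒜 := by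
    ext T
    simp only [Set.mem_setOf_eq, Set.mem_image, Finset.mem_coe, h𝒜, Finset.mem_filter,
      Finset.mem_powerset]
    constructor
    · rintro ⟨x, rfl⟩
      refine ⟨S.filter (fun z => z ∈ translateSet x C), ⟨Finset.filter_subset _ _, x, ?_⟩, ?_⟩
      · rw [Finset.coe_filter]; ext z; simp
      · rw [Finset.coe_filter]; ext z; simp
    · rintro ⟨B, ⟨hBS, x, hBx⟩, rfl⟩
      exact ⟨x, hBx⟩
  rw [himg, Set.ncard_image_of_injective _ Finset.coe_injective, Set.ncard_coe_finset]
  -- Sauer-Shelah (Pajor)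
  have hSS := Finset.card_le_card_shatterer 𝒜
  have hsub : 𝒜.shatterer ⊆ (Finset.range 4).biUnion (fun i => S.powersetCard i) := by
    intro B hB
    rw [Finset.mem_shatterer] at hB
    have hBS : B ⊆ S := by
      obtain ⟨u, hu𝒜, hu⟩ := hB (Finset.Subset.refl B)
      rw [h𝒜, Finset.mem_filter, Finset.mem_powerset] at hu𝒜
      calc B = B ∩ u := hu.symm
        _ ⊆ u := Finset.inter_subset_right
        _ ⊆ S := hu𝒜.1
    have hcard : B.card ≤ 3 := by
      apply part1 hCconv
      intro B' hB'B
      obtain ⟨u, hu𝒜, hu⟩ := hB hB'B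
      rw [h𝒜, Finset.mem_filter, Finset.mem_powerset] at hu𝒜
      obtain ⟨x, hx⟩ := hu𝒜.2
      refine ⟨x, ?_⟩
      rw [← hu]
      push_cast
      rw [hx]
      ext z
      simp only [Set.mem_inter_iff, Finset.mem_coe]
      constructor
      · rintro ⟨h1, h2, h3⟩; exact ⟨h1, h3⟩
      · rintro ⟨h1, h3⟩; exact ⟨h1, by exact_mod_cast hBS h1, h3⟩
    simp only [Finset.mem_biUnion, Finset.mem_range, Finset.mem_powersetCard]
    exact ⟨B.card, by omega, hBS, rfl⟩
  have hbound := (Finset.card_le_card hsub).trans (Finset.card_biUnion_le)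
  have hsum : ∑ i ∈ Finset.range 4, (S.powersetCard i).card
      = n.choose 0 + n.choose 1 + n.choose 2 + n.choose 3 := by
    simp [Finset.card_powersetCard, hS, Finset.sum_range_succ]
  omega

/-- If `C` is the interior of a convex body in the plane, then the VC-dimension of the
set system of translates of `C` is at most `3`: every finite set shattered by the
translates of `C` has at most `3` points. Consequently, for every `n ≥ 1` and every set
`S` of `n` points, the number of subsets of `S` induced by translates of `C` is at most
`C(n,0) + C(n,1) + C(n,2) + C(n,3)`. -/
theorem stmt16 (K : Set (ℝ × ℝ))
    (hKcomp : IsCompact K) (hKconv : Convex ℝ K) (hKint : (interior K).Nonempty)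
    (C : Set (ℝ × ℝ)) (hC : C = interior K) :
    (∀ A : Finset (ℝ × ℝ),
      (∀ B ⊆ A, ∃ x : ℝ × ℝ, (↑B : Set (ℝ × ℝ)) = ↑A ∩ translateSet x C) →
      A.card ≤ 3) ∧
    (∀ n : ℕ, 1 ≤ n → ∀ S : Finset (ℝ × ℝ), S.card = n →
      Set.ncard {T : Set (ℝ × ℝ) | ∃ x : ℝ × ℝ, T = ↑S ∩ translateSet x C}
        ≤ n.choose 0 + n.choose 1 + n.choose 2 + n.choose 3) := by
  have hCconv : Convex ℝ C := by rw [hC]; exact hKconv.interior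
  exact ⟨fun A H => part1 hCconv A H, fun n _ S hS => part2 hCconv n S hS⟩
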